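/- For every w ≥ 2, every minimizer with parameters (σ=2, k=2, w) has density at least (2^w + w + 5)/2^{w+2}; in particular, the order (01, 10, 00, 11) is optimal for all w ≥ 2. -/

import Mathlib

/-- The 2-mer of a binary string l starting at position i. -/
def kmerAt (l : List Bool) (i : ℕ) : List Bool := (l.drop i).take 2

/-- A window l of length w+2 is charged w.r.t. a rank function on 2-mers if its minimal
2-mer is its prefix, or is its suffix and that suffix occurs nowhere else in l. -/
def Charged (rank : List Bool → ℕ) (w : ℕ) (l : List Bool) : Prop :=
  (∀ i ≤ w, rank (kmerAt l 0) ≤ rank (kmerAt l i)) ∨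
  ((∀ i ≤ w, rank (kmerAt l w) ≤ rank (kmerAt l i)) ∧ ∀ i < w, kmerAt l i ≠ kmerAt l w)

namespace Stmt9Aux

def Mk (n : ℕ) (f : ℕ → Bool) : List Bool := List.ofFn fun j : Fin n => f j

lemma Mk_length (n f) : (Mk n f).length = n := List.length_ofFn

lemma kmer_Mk {n i : ℕ} (f : ℕ → Bool) (h : i + 2 ≤ n) :
    kmerAt (Mk n f) i = [f i, f (i+1)] := by
  apply List.ext_getElem
  · simp [kmerAt, Mk]; omega
  · intro m h1 h2
    simp only [kmerAt, Mk] at h1 ⊢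
    rw [List.getElem_take, List.getElem_drop, List.getElem_ofFn]
    simp only [List.length_take, List.length_drop, List.length_ofFn] at h1
    have hm : m < 2 := by omega
    interval_cases m <;> simp

lemma Mk_ne {n : ℕ} {f g : ℕ → Bool} (j : ℕ) (hj : j < n) (h : f j ≠ g j) :
    Mk n f ≠ Mk n g := by
  intro he
  apply h
  have := congrArg (fun l => l.getD j false) he
  simpa [Mk, List.getD_eq_getElem?_getD, List.getElem?_ofFn, hj] using this

section
variable (rank : List Bool → ℕ) (w : ℕ)

lemma charged_T1 (f : ℕ → Bool)
    (h : ∀ i, i ≤ w → rank [f 0, f 1] ≤ rank [f i, f (i+1)]) :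
    Charged rank w (Mk (w+2) f) := by
  left
  intro i hi
  rw [kmer_Mk f (by omega), kmer_Mk f (by omega)]
  exact h i hi

lemma charged_T2 (f : ℕ → Bool)
    (hmin : ∀ i, i ≤ w → rank [f w, f (w+1)] ≤ rank [f i, f (i+1)])
    (huniq : ∀ i, i < w → [f i, f (i+1)] ≠ [f w, f (w+1)]) :
    Charged rank w (Mk (w+2) f) := by
  right
  constructor
  · intro i hi
    rw [kmer_Mk f (by omega), kmer_Mk f (by omega)]
    exact hmin i hi
  · intro i hi
    rw [kmer_Mk f (by omega), kmer_Mk f (by omega)]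
    exact huniq i hi

lemma charged_T1min (f : ℕ → Bool)
    (hm : ∀ a b : Bool, rank [f 0, f 1] ≤ rank [a, b]) :
    Charged rank w (Mk (w+2) f) :=
  charged_T1 rank w f fun i _ => hm (f i) (f (i+1))

/-- assembly of the injection from base family + extras -/
lemma assemble (p0 p1 : Bool) (e : ℕ → ℕ → Bool)
    (hb : ∀ s : Fin w → Bool,
      Charged rank w (Mk (w+2) (fun j => if h : 2 ≤ j ∧ j - 2 < w then s ⟨j-2, h.2⟩
        else if j = 0 then p0 else p1)))
    (he : ∀ m, m < w + 5 → Charged rank w (Mk (w+2) (e m)))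
    (hcross : ∀ m, m < w + 5 → ¬(e m 0 = p0 ∧ e m 1 = p1))
    (hpair : ∀ m m', m < m' → m' < w + 5 → ∃ j, j < w + 2 ∧ e m j ≠ e m' j) :
    ∃ F : (Fin w → Bool) ⊕ Fin (w+5) → List Bool, Function.Injective F ∧
      ∀ d, (F d).length = w+2 ∧ Charged rank w (F d) := by
  refine ⟨Sum.elim
      (fun s => Mk (w+2) (fun j => if h : 2 ≤ j ∧ j - 2 < w then s ⟨j-2, h.2⟩
        else if j = 0 then p0 else p1))
      (fun m => Mk (w+2) (e m)), ?_, ?_⟩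
  · rintro (s | m) (s' | m') hEq
    · simp only [Sum.elim_inl] at hEq
      congr 1
      funext j
      by_contra hne
      exact Mk_ne (j+2) (by omega) (by simpa using hne) hEq
    · exfalso
      simp only [Sum.elim_inl, Sum.elim_inr] at hEq
      rcases not_and_or.mp (hcross m' m'.2) with h | h
      · exact Mk_ne 0 (by omega) (by simpa using (Ne.symm h)) hEq
      · exact Mk_ne 1 (by omega) (by simpa using (Ne.symm h)) hEq
    · exfalso
      simp only [Sum.elim_inl, Sum.elim_inr] at hEq
      rcases not_and_or.mp (hcross m m.2) with h | h
      · exact Mk_ne 0 (by omega) (by simpa using h) hEq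
      · exact Mk_ne 1 (by omega) (by simpa using h) hEq
    · simp only [Sum.elim_inr] at hEq
      congr 1
      by_contra hne
      have hne' : (m : ℕ) ≠ (m' : ℕ) := fun h => hne (by ext; exact h)
      rcases hne'.lt_or_gt with h | h
      · obtain ⟨j, hj, hd⟩ := hpair m m' h m'.2
        exact Mk_ne j (by omega) hd hEq
      · obtain ⟨j, hj, hd⟩ := hpair m' m h m.2
        exact Mk_ne j (by omega) hd hEq.symm
  · rintro (s | m) <;> simp only [Sum.elim_inl, Sum.elim_inr]
    · exact ⟨Mk_length _ _, hb s⟩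
    · exact ⟨Mk_length _ _, he m m.2⟩

end

section
variable (rank : List Bool → ℕ) (w : ℕ)

lemma charged_const (c : Bool) : Charged rank w (Mk (w+2) (fun _ => c)) :=
  charged_T1 rank w _ (fun _ _ => le_refl _)

/-- the string 1^{w+1}0 is always charged -/
lemma charged_oneszero (hw : 2 ≤ w) : Charged rank w (Mk (w+2) (fun j => decide (j ≤ w))) := by
  have hf : ∀ j, j ≤ w → (decide (j ≤ w)) = true := fun j hj => decide_eq_true hj
  have hf' : (decide (w + 1 ≤ w)) = false := by simp
  rcases le_total (rank [true, true]) (rank [true, false]) with h | h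
  · apply charged_T1
    intro i hi
    rw [hf 0 (by omega), hf 1 (by omega), hf i hi]
    rcases Nat.lt_or_ge i w with hlt | hge
    · rw [hf (i+1) (by omega)]
    · have : i = w := by omega
      subst this
      rw [hf']
      exact h
  · apply charged_T2
    · intro i hi
      rw [hf w (by omega), hf', hf i hi]
      rcases Nat.lt_or_ge i w with hlt | hge
      · rw [hf (i+1) (by omega)]; exact h
      · have : i = w := by omega
        subst this
        rw [hf']
    · intro i hi heq
      rw [hf i (by omega), hf (i+1) (by omega), hf w (by omega), hf'] at heq
      simp at heq

lemma caseA (hw : 2 ≤ w)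
    (h00 : rank [false,true] ≤ rank [false,false])
    (h10 : rank [false,true] ≤ rank [true,false])
    (h11 : rank [false,true] ≤ rank [true,true]) :
    ∃ F : (Fin w → Bool) ⊕ Fin (w+5) → List Bool, Function.Injective F ∧
      ∀ d, (F d).length = w+2 ∧ Charged rank w (F d) := by
  have le01 : ∀ a b : Bool, rank [false,true] ≤ rank [a,b] := by
    intro a b
    cases a <;> cases b
    · exact h00
    · exact le_refl _
    · exact h10
    · exact h11
  -- the sixth extra string g6
  obtain ⟨g6, hg6c, hg60, hg6top, j6, hj6, hj6f⟩ :
      ∃ g : ℕ → Bool, Charged rank w (Mk (w+2) g) ∧ g 0 = true ∧ g (w+1) = false ∧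
        ∃ j, j ≤ w ∧ g j = false := by
    rcases le_total (rank [true,false]) (rank [false,false]) with h1 | h1
    · -- 10^{w+1}
      refine ⟨fun j => decide (j = 0), ?_, by simp, by simp, 1, by omega, by simp⟩
      apply charged_T1
      intro i hi
      have e0 : (decide ((0:ℕ) = 0)) = true := by simp
      have e1 : (decide ((1:ℕ) = 0)) = false := by simp
      rw [e0, e1]
      rcases Nat.eq_zero_or_pos i with rfl | hpos
      · rw [e0, e1]
      · rw [decide_eq_false (by omega : ¬ i = 0), decide_eq_false (by omega : ¬ i + 1 = 0)]
        exact h1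
    · rcases le_total (rank [false,false]) (rank [true,true]) with h2 | h2
      · -- 1^w 0 0
        refine ⟨fun j => decide (j < w), ?_, decide_eq_true (by omega),
          decide_eq_false (by omega), w, le_refl _, decide_eq_false (by omega)⟩
        apply charged_T2
        · intro i hi
          rw [decide_eq_false (by omega : ¬ w < w), decide_eq_false (by omega : ¬ w+1 < w)]
          rcases Nat.lt_or_ge i w with hlt | hge
          · rw [decide_eq_true hlt]
            rcases Nat.lt_or_ge (i+1) w with hlt2 | hge2
            · rw [decide_eq_true hlt2]; exact h2
            · rw [decide_eq_false (by omega : ¬ i + 1 < w)]; exact h1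
          · rw [decide_eq_false (by omega : ¬ i < w), decide_eq_false (by omega : ¬ i + 1 < w)]
        · intro i hi heq
          rw [decide_eq_true (by omega : i < w), decide_eq_false (by omega : ¬ w < w)] at heq
          simp at heq
      · -- 1 1 0^w
        refine ⟨fun j => decide (j < 2), ?_, by simp, decide_eq_false (by omega),
          2, hw, by simp⟩
        apply charged_T1
        intro i hi
        rw [decide_eq_true (by omega : (0:ℕ) < 2), decide_eq_true (by omega : (1:ℕ) < 2)]
        rcases Nat.eq_zero_or_pos i with rfl | hpos
        · rw [decide_eq_true (by omega : (0:ℕ) < 2), decide_eq_true (by omega : (1:ℕ) < 2)]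
        rcases Nat.lt_or_ge i 2 with hlt | hge
        · have hieq : i = 1 := by omega
          rw [hieq, decide_eq_true (by omega : (1:ℕ) < 2),
            decide_eq_false (by omega : ¬ (1:ℕ) + 1 < 2)]
          exact le_trans h2 h1
        · rw [decide_eq_false (by omega : ¬ i < 2), decide_eq_false (by omega : ¬ i + 1 < 2)]
          exact h2
  -- extras
  refine assemble rank w false true
    (fun m => if m ≤ w then (fun j => decide (j < m) || decide (j = w+1))
      else if m = w+1 then (fun _ => false)
      else if m = w+2 then (fun _ => true)
      else if m = w+3 then (fun j => decide (j ≤ w))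
      else g6) ?_ ?_ ?_ ?_
  · -- base family charged
    intro s
    apply charged_T1min
    intro a b
    have e0 : (if h : 2 ≤ 0 ∧ 0 - 2 < w then s ⟨0-2, h.2⟩ else if 0 = 0 then false else true)
        = false := by simp
    have e1 : (if h : 2 ≤ 1 ∧ 1 - 2 < w then s ⟨1-2, h.2⟩ else if 1 = 0 then false else true)
        = true := by norm_num
    rw [e0, e1]
    exact le01 a b
  · -- extras charged
    intro m hm
    beta_reduce
    rcases Nat.lt_or_ge m (w+1) with h | h
    · rw [if_pos (by omega : m ≤ w)]
      apply charged_T2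
      · intro i hi
        have ew : (decide (w < m) || decide (w = w+1)) = false := by
          simp; omega
        have ew1 : (decide (w+1 < m) || decide (w+1 = w+1)) = true := by simp
        rw [ew, ew1]
        exact le01 _ _
      · intro i hi heq
        have ew : (decide (w < m) || decide (w = w+1)) = false := by simp; omega
        have ew1 : (decide (w+1 < m) || decide (w+1 = w+1)) = true := by simp
        rw [ew, ew1] at heq
        injection heq with h1 h2
        injection h2 with h2 _
        simp only [Bool.or_eq_false_iff, decide_eq_false_iff_not, Bool.or_eq_true,
          decide_eq_true_eq] at h1 h2
        omega
    · rw [if_neg (by omega)]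
      rcases Nat.eq_or_lt_of_le h with h1 | h1
      · rw [if_pos (by omega)]
        exact charged_const rank w false
      rcases Nat.eq_or_lt_of_le h1 with h2 | h2
      · rw [if_neg (by omega), if_pos (by omega)]
        exact charged_const rank w true
      rcases Nat.eq_or_lt_of_le h2 with h3 | h3
      · rw [if_neg (by omega), if_neg (by omega), if_pos (by omega)]
        exact charged_oneszero rank w hw
      · rw [if_neg (by omega), if_neg (by omega), if_neg (by omega)]
        exact hg6c
  · -- cross
    intro m hm hcon
    obtain ⟨hc0, hc1⟩ := hcon
    beta_reduce at hc0 hc1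
    rcases Nat.lt_or_ge m (w+1) with h | h
    · rw [if_pos (by omega : m ≤ w)] at hc0 hc1
      simp only [Bool.or_eq_false_iff, Bool.or_eq_true, decide_eq_false_iff_not,
        decide_eq_true_eq] at hc0 hc1
      omega
    · rw [if_neg (by omega)] at hc0 hc1
      rcases Nat.eq_or_lt_of_le h with h1 | h1
      · rw [if_pos (by omega)] at hc1
        exact absurd hc1 (by simp)
      rcases Nat.eq_or_lt_of_le h1 with h2 | h2
      · rw [if_neg (by omega), if_pos (by omega)] at hc0
        exact absurd hc0 (by simp)
      rcases Nat.eq_or_lt_of_le h2 with h3 | h3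
      · rw [if_neg (by omega), if_neg (by omega), if_pos (by omega)] at hc0
        exact absurd hc0 (by simp)
      · rw [if_neg (by omega), if_neg (by omega), if_neg (by omega)] at hc0
        rw [hg60] at hc0
        exact absurd hc0 (by simp)
  · -- pairwise
    intro m m' hlt hm'
    beta_reduce
    rcases Nat.lt_or_ge m' (w+1) with h' | h'
    · -- both ≤ w
      refine ⟨m, by omega, ?_⟩
      rw [if_pos (by omega : m ≤ w), if_pos (by omega : m' ≤ w)]
      have e1 : (decide (m < m) || decide (m = w+1)) = false := by simp; omega
      have e2 : (decide (m < m') || decide (m = w+1)) = true := by simp; omega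
      rw [e1, e2]
      simp
    · rcases Nat.lt_or_ge m (w+1) with h | h
      · -- m ≤ w, m' is a singleton
        rw [if_neg (by omega : ¬ m' ≤ w)]
        rcases Nat.eq_or_lt_of_le h' with h1 | h1
        · refine ⟨w+1, by omega, ?_⟩
          rw [if_pos (by omega : m ≤ w), if_pos (by omega : m' = w+1)]
          simp
        rcases Nat.eq_or_lt_of_le h1 with h2 | h2
        · refine ⟨w, by omega, ?_⟩
          rw [if_pos (by omega : m ≤ w), if_neg (by omega), if_pos (by omega : m' = w+2)]
          simp; omega
        rcases Nat.eq_or_lt_of_le h2 with h3 | h3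
        · refine ⟨w, by omega, ?_⟩
          rw [if_pos (by omega : m ≤ w), if_neg (by omega), if_neg (by omega),
            if_pos (by omega : m' = w+3)]
          simp; omega
        · refine ⟨w+1, by omega, ?_⟩
          rw [if_pos (by omega : m ≤ w), if_neg (by omega), if_neg (by omega),
            if_neg (by omega)]
          rw [hg6top]
          simp
      · -- both singletons
        rw [if_neg (by omega : ¬ m ≤ w), if_neg (by omega : ¬ m' ≤ w)]
        rcases Nat.eq_or_lt_of_le h with h1 | h1
        · rw [if_pos (by omega : m = w+1)]
          rcases Nat.eq_or_lt_of_le h' with g1 | g1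
          · omega
          rcases Nat.eq_or_lt_of_le g1 with g2 | g2
          · rw [if_neg (by omega), if_pos (by omega : m' = w+2)]
            exact ⟨0, by omega, by simp⟩
          rcases Nat.eq_or_lt_of_le g2 with g3 | g3
          · rw [if_neg (by omega), if_neg (by omega), if_pos (by omega : m' = w+3)]
            refine ⟨0, by omega, ?_⟩
            simp
          · rw [if_neg (by omega), if_neg (by omega), if_neg (by omega)]
            exact ⟨0, by omega, by rw [hg60]; simp⟩
        rcases Nat.eq_or_lt_of_le h1 with h2 | h2
        · rw [if_neg (by omega), if_pos (by omega : m = w+2)]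
          rcases Nat.eq_or_lt_of_le h' with g1 | g1
          · omega
          rcases Nat.eq_or_lt_of_le g1 with g2 | g2
          · omega
          rcases Nat.eq_or_lt_of_le g2 with g3 | g3
          · rw [if_neg (by omega), if_neg (by omega), if_pos (by omega : m' = w+3)]
            refine ⟨w+1, by omega, ?_⟩
            simp
          · rw [if_neg (by omega), if_neg (by omega), if_neg (by omega)]
            exact ⟨w+1, by omega, by rw [hg6top]; simp⟩
        · have hm3 : m = w + 3 := by omega
          have hm4 : m' = w + 4 := by omega
          rw [if_neg (by omega), if_neg (by omega), if_pos hm3,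
            if_neg (by omega), if_neg (by omega), if_neg (by omega)]
          refine ⟨j6, by omega, ?_⟩
          rw [hj6f, decide_eq_true hj6]
          simp

end

section
variable (rank : List Bool → ℕ) (w : ℕ)

lemma charged_T1_nz (f : ℕ → Bool)
    (hnz : ∀ i, i ≤ w → ¬(f i = false ∧ f (i+1) = false))
    (hm : ∀ a b : Bool, ¬(a = false ∧ b = false) → rank [f 0, f 1] ≤ rank [a, b]) :
    Charged rank w (Mk (w+2) f) :=
  charged_T1 rank w f (fun i hi => hm _ _ (hnz i hi))

lemma charged_T2_gen (f : ℕ → Bool) (c0 c1 : Bool) (hfw : f w = c0) (hfw1 : f (w+1) = c1)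
    (hmin : ∀ i, i ≤ w → rank [c0, c1] ≤ rank [f i, f (i+1)])
    (huniq : ∀ i, i < w → ¬(f i = c0 ∧ f (i+1) = c1)) :
    Charged rank w (Mk (w+2) f) := by
  apply charged_T2
  · intro i hi
    rw [hfw, hfw1]
    exact hmin i hi
  · intro i hi heq
    rw [hfw, hfw1] at heq
    injection heq with e1 e2
    injection e2 with e2 _
    exact huniq i hi ⟨e1, e2⟩

/-- 1^w 0 0 is charged whenever 00 is globally minimal -/
lemma charged_pow00 (hw : 2 ≤ w) (le00 : ∀ a b : Bool, rank [false,false] ≤ rank [a,b]) :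
    Charged rank w (Mk (w+2) (fun j => decide (j < w))) := by
  apply charged_T2_gen rank w _ false false (decide_eq_false (by omega))
    (decide_eq_false (by omega))
  · intro i hi
    exact le00 _ _
  · intro i hi hcon
    rw [decide_eq_true hi] at hcon  -- wrong name of hyp; fix below
    simp at hcon

/-- 0 1^{w-1} 0 0 is charged whenever 00 is globally minimal -/
lemma charged_01pow00 (hw : 2 ≤ w) (le00 : ∀ a b : Bool, rank [false,false] ≤ rank [a,b]) :
    Charged rank w (Mk (w+2) (fun j => decide (1 ≤ j ∧ j < w))) := by
  apply charged_T2_gen rank w _ false false (decide_eq_false (by omega))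
    (decide_eq_false (by omega))
  · intro i hi
    exact le00 _ _
  · intro i hi hcon
    obtain ⟨e1, e2⟩ := hcon
    simp only [decide_eq_false_iff_not, not_and] at e1 e2
    omega

lemma caseB (hw : 2 ≤ w)
    (hA : rank [false,false] ≤ rank [false,true])
    (hB : rank [false,false] ≤ rank [true,false])
    (hC : rank [false,false] ≤ rank [true,true])
    (h1 : rank [false,true] ≤ rank [true,false])
    (h2 : rank [false,true] ≤ rank [true,true]) :
    ∃ F : (Fin w → Bool) ⊕ Fin (w+5) → List Bool, Function.Injective F ∧
      ∀ d, (F d).length = w+2 ∧ Charged rank w (F d) := by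
  have le00 : ∀ a b : Bool, rank [false,false] ≤ rank [a,b] := by
    intro a b
    cases a <;> cases b
    · exact le_refl _
    · exact hA
    · exact hB
    · exact hC
  have le01nz : ∀ a b : Bool, ¬(a = false ∧ b = false) → rank [false,true] ≤ rank [a,b] := by
    intro a b hab
    cases a <;> cases b
    · exact absurd ⟨rfl, rfl⟩ hab
    · exact le_refl _
    · exact h1
    · exact h2
  refine assemble rank w false false
    (fun m => if m ≤ w then
        (fun j => if j = 0 then false else (decide (j ≤ m+1) || decide ((j - m) % 2 = 1)))
      else if m = w+1 then (fun j => decide (j < w))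
      else if m = w+2 then (fun _ => true)
      else if m = w+3 then (fun j => decide (j < w) || decide (j = w+1))
      else (fun j => decide (j ≤ w))) ?_ ?_ ?_ ?_
  · -- base family charged
    intro s
    apply charged_T1min
    intro a b
    have e0 : (if h : 2 ≤ 0 ∧ 0 - 2 < w then s ⟨0-2, h.2⟩ else if 0 = 0 then false else false)
        = false := by simp
    have e1 : (if h : 2 ≤ 1 ∧ 1 - 2 < w then s ⟨1-2, h.2⟩ else if 1 = 0 then false else false)
        = false := by norm_num
    rw [e0, e1]
    exact le00 a b
  · -- extras charged
    intro m hm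
    beta_reduce
    rcases Nat.lt_or_ge m (w+1) with h | h
    · rw [if_pos (by omega : m ≤ w)]
      apply charged_T1_nz
      · intro i hi hcon
        obtain ⟨e1, e2⟩ := hcon
        rcases Nat.eq_zero_or_pos i with rfl | hpos
        · rw [if_neg (by omega : ¬ (0:ℕ)+1 = 0)] at e2
          simp only [Bool.or_eq_false_iff, decide_eq_false_iff_not] at e2
          omega
        · rw [if_neg (by omega : ¬ i = 0)] at e1
          rw [if_neg (by omega : ¬ i+1 = 0)] at e2
          simp only [Bool.or_eq_false_iff, decide_eq_false_iff_not] at e1 e2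
          omega
      · intro a b hab
        have e0 : (if (0:ℕ) = 0 then false else (decide (0 ≤ m+1) || decide ((0 - m) % 2 = 1)))
            = false := by simp
        have e1 : (if (1:ℕ) = 0 then false else (decide (1 ≤ m+1) || decide ((1 - m) % 2 = 1)))
            = true := by
          rw [if_neg (by omega : ¬ (1:ℕ) = 0), decide_eq_true (by omega : 1 ≤ m+1)]
          simp
        rw [e0, e1]
        exact le01nz a b hab
    · rw [if_neg (by omega)]
      rcases Nat.eq_or_lt_of_le h with h1' | h1'
      · rw [if_pos (by omega)]
        exact charged_pow00 rank w hw le00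
      rcases Nat.eq_or_lt_of_le h1' with h2' | h2'
      · rw [if_neg (by omega), if_pos (by omega)]
        exact charged_const rank w true
      rcases Nat.eq_or_lt_of_le h2' with h3' | h3'
      · rw [if_neg (by omega), if_neg (by omega), if_pos (by omega)]
        apply charged_T2_gen rank w _ false true
          (by simp only [Bool.or_eq_false_iff]
              exact ⟨decide_eq_false (by omega), decide_eq_false (by omega)⟩)
          (by rw [decide_eq_true (rfl : w+1 = w+1)]; simp)
        · intro i hi
          apply le01nz
          intro hcon
          obtain ⟨e1, e2⟩ := hcon
          simp only [Bool.or_eq_false_iff, decide_eq_false_iff_not] at e1 e2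
          omega
        · intro i hi hcon
          obtain ⟨e1, e2⟩ := hcon
          simp only [Bool.or_eq_false_iff, Bool.or_eq_true, decide_eq_false_iff_not,
            decide_eq_true_eq] at e1 e2
          omega
      · rw [if_neg (by omega), if_neg (by omega), if_neg (by omega)]
        exact charged_oneszero rank w hw
  · -- cross
    intro m hm hcon
    obtain ⟨hc0, hc1⟩ := hcon
    beta_reduce at hc0 hc1
    rcases Nat.lt_or_ge m (w+1) with h | h
    · rw [if_pos (by omega : m ≤ w), if_neg (by omega : ¬ (1:ℕ) = 0),
        decide_eq_true (by omega : 1 ≤ m+1)] at hc1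
      simp at hc1
    · rw [if_neg (by omega)] at hc0
      rcases Nat.eq_or_lt_of_le h with h1' | h1'
      · rw [if_pos (by omega), decide_eq_true (by omega : 0 < w)] at hc0
        simp at hc0
      rcases Nat.eq_or_lt_of_le h1' with h2' | h2'
      · rw [if_neg (by omega), if_pos (by omega)] at hc0
        simp at hc0
      rcases Nat.eq_or_lt_of_le h2' with h3' | h3'
      · rw [if_neg (by omega), if_neg (by omega), if_pos (by omega),
          decide_eq_true (by omega : 0 < w)] at hc0
        simp at hc0
      · rw [if_neg (by omega), if_neg (by omega), if_neg (by omega),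
          decide_eq_true (by omega : 0 ≤ w)] at hc0
        simp at hc0
  · -- pairwise
    intro m m' hlt hm'
    beta_reduce
    rcases Nat.lt_or_ge m' (w+1) with h' | h'
    · refine ⟨m+2, by omega, ?_⟩
      rw [if_pos (by omega : m ≤ w), if_pos (by omega : m' ≤ w),
        if_neg (by omega : ¬ m+2 = 0), if_neg (by omega : ¬ m+2 = 0),
        decide_eq_false (by omega : ¬ m+2 ≤ m+1),
        decide_eq_false (by omega : ¬ (m+2-m) % 2 = 1),
        decide_eq_true (by omega : m+2 ≤ m'+1)]
      simp
    · rcases Nat.lt_or_ge m (w+1) with h | h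
      · -- m ≤ w vs singleton: all differ at j = 0
        refine ⟨0, by omega, ?_⟩
        rw [if_pos (by omega : m ≤ w), if_pos rfl, if_neg (by omega : ¬ m' ≤ w)]
        rcases Nat.eq_or_lt_of_le h' with h1' | h1'
        · rw [if_pos (by omega : m' = w+1), decide_eq_true (by omega : 0 < w)]
          simp
        rcases Nat.eq_or_lt_of_le h1' with h2' | h2'
        · rw [if_neg (by omega), if_pos (by omega : m' = w+2)]
          simp
        rcases Nat.eq_or_lt_of_le h2' with h3' | h3'
        · rw [if_neg (by omega), if_neg (by omega), if_pos (by omega : m' = w+3),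
            decide_eq_true (by omega : 0 < w)]
          simp
        · rw [if_neg (by omega), if_neg (by omega), if_neg (by omega),
            decide_eq_true (by omega : 0 ≤ w)]
          simp
      · rw [if_neg (by omega : ¬ m ≤ w), if_neg (by omega : ¬ m' ≤ w)]
        rcases Nat.eq_or_lt_of_le h with h1' | h1'
        · rw [if_pos (by omega : m = w+1)]
          rcases Nat.eq_or_lt_of_le h' with g1 | g1
          · omega
          rcases Nat.eq_or_lt_of_le g1 with g2 | g2
          · rw [if_neg (by omega), if_pos (by omega : m' = w+2)]
            refine ⟨w, by omega, ?_⟩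
            rw [decide_eq_false (by omega : ¬ w < w)]
            simp
          rcases Nat.eq_or_lt_of_le g2 with g3 | g3
          · rw [if_neg (by omega), if_neg (by omega), if_pos (by omega : m' = w+3)]
            refine ⟨w+1, by omega, ?_⟩
            rw [decide_eq_false (by omega : ¬ w+1 < w)]
            simp
          · rw [if_neg (by omega), if_neg (by omega), if_neg (by omega)]
            refine ⟨w, by omega, ?_⟩
            rw [decide_eq_false (by omega : ¬ w < w), decide_eq_true (by omega : w ≤ w)]
            simp
        rcases Nat.eq_or_lt_of_le h1' with h2' | h2'
        · rw [if_neg (by omega), if_pos (by omega : m = w+2)]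
          rcases Nat.eq_or_lt_of_le h' with g1 | g1
          · omega
          rcases Nat.eq_or_lt_of_le g1 with g2 | g2
          · omega
          rcases Nat.eq_or_lt_of_le g2 with g3 | g3
          · rw [if_neg (by omega), if_neg (by omega), if_pos (by omega : m' = w+3)]
            refine ⟨w, by omega, ?_⟩
            rw [decide_eq_false (by omega : ¬ w < w), decide_eq_false (by omega : ¬ w = w+1)]
            simp
          · rw [if_neg (by omega), if_neg (by omega), if_neg (by omega)]
            refine ⟨w+1, by omega, ?_⟩
            rw [decide_eq_false (by omega : ¬ w+1 ≤ w)]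
            simp
        · have hm3 : m = w + 3 := by omega
          have hm4 : m' = w + 4 := by omega
          rw [if_neg (by omega), if_neg (by omega), if_pos hm3,
            if_neg (by omega), if_neg (by omega), if_neg (by omega)]
          refine ⟨w+1, by omega, ?_⟩
          rw [decide_eq_true (rfl : w+1 = w+1), decide_eq_false (by omega : ¬ w+1 ≤ w)]
          simp

end

section
variable (rank : List Bool → ℕ) (w : ℕ)

lemma caseB' (hw : 2 ≤ w)
    (hA : rank [false,false] ≤ rank [false,true])
    (hB : rank [false,false] ≤ rank [true,false])
    (hC : rank [false,false] ≤ rank [true,true])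
    (h1 : rank [true,false] ≤ rank [false,true])
    (h2 : rank [true,false] ≤ rank [true,true]) :
    ∃ F : (Fin w → Bool) ⊕ Fin (w+5) → List Bool, Function.Injective F ∧
      ∀ d, (F d).length = w+2 ∧ Charged rank w (F d) := by
  have le00 : ∀ a b : Bool, rank [false,false] ≤ rank [a,b] := by
    intro a b
    cases a <;> cases b
    · exact le_refl _
    · exact hA
    · exact hB
    · exact hC
  have le10nz : ∀ a b : Bool, ¬(a = false ∧ b = false) → rank [true,false] ≤ rank [a,b] := by
    intro a b hab
    cases a <;> cases b
    · exact absurd ⟨rfl, rfl⟩ hab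
    · exact h1
    · exact le_refl _
    · exact h2
  refine assemble rank w false false
    (fun m => if m + 1 ≤ w then
        (fun j => if j = 1 then false else (decide (j ≤ m+2) || decide ((j - m) % 2 = 0)))
      else if m = w then (fun j => decide (1 ≤ j ∧ j < w))
      else if m = w+1 then (fun j => decide (j < w))
      else if m = w+2 then (fun _ => true)
      else if m = w+3 then (fun j => decide (j ≤ w))
      else (fun j => decide (1 ≤ j ∧ j ≤ w))) ?_ ?_ ?_ ?_
  · -- base family charged
    intro s
    apply charged_T1min
    intro a b
    have e0 : (if h : 2 ≤ 0 ∧ 0 - 2 < w then s ⟨0-2, h.2⟩ else if 0 = 0 then false else false)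
        = false := by simp
    have e1 : (if h : 2 ≤ 1 ∧ 1 - 2 < w then s ⟨1-2, h.2⟩ else if 1 = 0 then false else false)
        = false := by norm_num
    rw [e0, e1]
    exact le00 a b
  · -- extras charged
    intro m hm
    beta_reduce
    rcases Nat.lt_or_ge m w with h | h
    · rw [if_pos (by omega : m + 1 ≤ w)]
      apply charged_T1_nz
      · intro i hi hcon
        obtain ⟨e1, e2⟩ := hcon
        rcases eq_or_ne i 1 with rfl | hne
        · rw [if_neg (by omega : ¬ (1:ℕ)+1 = 1)] at e2
          simp only [Bool.or_eq_false_iff, decide_eq_false_iff_not] at e2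
          omega
        · rcases eq_or_ne i 0 with rfl | hne0
          · rw [if_neg (by omega : ¬ (0:ℕ) = 1)] at e1
            simp only [Bool.or_eq_false_iff, decide_eq_false_iff_not] at e1
            omega
          · rw [if_neg hne] at e1
            rw [if_neg (by omega : ¬ i+1 = 1)] at e2
            simp only [Bool.or_eq_false_iff, decide_eq_false_iff_not] at e1 e2
            omega
      · intro a b hab
        have e0 : (if (0:ℕ) = 1 then false else (decide (0 ≤ m+2) || decide ((0 - m) % 2 = 0)))
            = true := by
          rw [if_neg (by omega : ¬ (0:ℕ) = 1), decide_eq_true (by omega : 0 ≤ m+2)]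
          simp
        have e1 : (if (1:ℕ) = 1 then false else (decide (1 ≤ m+2) || decide ((1 - m) % 2 = 0)))
            = false := by simp
        rw [e0, e1]
        exact le10nz a b hab
    · rw [if_neg (by omega)]
      rcases Nat.eq_or_lt_of_le h with h1' | h1'
      · rw [if_pos (by omega)]
        exact charged_01pow00 rank w hw le00
      rcases Nat.eq_or_lt_of_le h1' with h2' | h2'
      · rw [if_neg (by omega), if_pos (by omega)]
        exact charged_pow00 rank w hw le00
      rcases Nat.eq_or_lt_of_le h2' with h3' | h3'
      · rw [if_neg (by omega), if_neg (by omega), if_pos (by omega)]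
        exact charged_const rank w true
      rcases Nat.eq_or_lt_of_le h3' with h4' | h4'
      · rw [if_neg (by omega), if_neg (by omega), if_neg (by omega), if_pos (by omega)]
        exact charged_oneszero rank w hw
      · rw [if_neg (by omega), if_neg (by omega), if_neg (by omega), if_neg (by omega)]
        -- 0 1^w 0 : T2 with suffix [true, false]
        apply charged_T2_gen rank w _ true false
          (decide_eq_true (by omega : 1 ≤ w ∧ w ≤ w))
          (decide_eq_false (by omega : ¬ (1 ≤ w+1 ∧ w+1 ≤ w)))
        · intro i hi
          apply le10nz
          intro hcon
          obtain ⟨e1, e2⟩ := hcon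
          simp only [decide_eq_false_iff_not, not_and] at e1 e2
          omega
        · intro i hi hcon
          obtain ⟨e1, e2⟩ := hcon
          rw [decide_eq_true (by omega : 1 ≤ i+1 ∧ i+1 ≤ w)] at e2
          simp at e2
  · -- cross
    intro m hm hcon
    obtain ⟨hc0, hc1⟩ := hcon
    beta_reduce at hc0 hc1
    rcases Nat.lt_or_ge m w with h | h
    · rw [if_pos (by omega : m + 1 ≤ w), if_neg (by omega : ¬ (0:ℕ) = 1),
        decide_eq_true (by omega : 0 ≤ m+2)] at hc0
      simp at hc0
    · rw [if_neg (by omega)] at hc0 hc1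
      rcases Nat.eq_or_lt_of_le h with h1' | h1'
      · rw [if_pos (by omega), decide_eq_true (by omega : 1 ≤ 1 ∧ 1 < w)] at hc1
        simp at hc1
      rcases Nat.eq_or_lt_of_le h1' with h2' | h2'
      · rw [if_neg (by omega), if_pos (by omega), decide_eq_true (by omega : 0 < w)] at hc0
        simp at hc0
      rcases Nat.eq_or_lt_of_le h2' with h3' | h3'
      · rw [if_neg (by omega), if_neg (by omega), if_pos (by omega)] at hc0
        simp at hc0
      rcases Nat.eq_or_lt_of_le h3' with h4' | h4'
      · rw [if_neg (by omega), if_neg (by omega), if_neg (by omega), if_pos (by omega),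
          decide_eq_true (by omega : 0 ≤ w)] at hc0
        simp at hc0
      · rw [if_neg (by omega), if_neg (by omega), if_neg (by omega), if_neg (by omega),
          decide_eq_true (by omega : 1 ≤ 1 ∧ 1 ≤ w)] at hc1
        simp at hc1
  · -- pairwise
    intro m m' hlt hm'
    beta_reduce
    rcases Nat.lt_or_ge m' w with h' | h'
    · refine ⟨m+3, by omega, ?_⟩
      beta_reduce
      rw [if_pos (by omega : m + 1 ≤ w), if_pos (by omega : m' + 1 ≤ w),
        if_neg (by omega : ¬ m+3 = 1), if_neg (by omega : ¬ m+3 = 1),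
        decide_eq_false (by omega : ¬ m+3 ≤ m+2),
        decide_eq_false (by omega : ¬ (m+3-m) % 2 = 0),
        decide_eq_true (by omega : m+3 ≤ m'+2)]
      simp
    · rcases Nat.lt_or_ge m w with h | h
      · -- m < w vs singleton
        rw [if_pos (by omega : m + 1 ≤ w), if_neg (by omega : ¬ m' + 1 ≤ w)]
        rcases Nat.eq_or_lt_of_le h' with h1' | h1'
        · refine ⟨0, by omega, ?_⟩
          beta_reduce
          rw [if_pos (by omega : m' = w), if_neg (by omega : ¬ (0:ℕ) = 1),
            decide_eq_true (by omega : 0 ≤ m+2),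
            decide_eq_false (by omega : ¬ (1 ≤ 0 ∧ 0 < w))]
          simp
        rcases Nat.eq_or_lt_of_le h1' with h2' | h2'
        · refine ⟨1, by omega, ?_⟩
          beta_reduce
          rw [if_pos rfl, if_neg (by omega : ¬ m' = w), if_pos (by omega : m' = w+1),
            decide_eq_true (by omega : 1 < w)]
          simp
        rcases Nat.eq_or_lt_of_le h2' with h3' | h3'
        · refine ⟨1, by omega, ?_⟩
          beta_reduce
          rw [if_pos rfl, if_neg (by omega : ¬ m' = w), if_neg (by omega : ¬ m' = w+1),
            if_pos (by omega : m' = w+2)]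
          simp
        rcases Nat.eq_or_lt_of_le h3' with h4' | h4'
        · refine ⟨1, by omega, ?_⟩
          beta_reduce
          rw [if_pos rfl, if_neg (by omega : ¬ m' = w), if_neg (by omega : ¬ m' = w+1),
            if_neg (by omega : ¬ m' = w+2), if_pos (by omega : m' = w+3),
            decide_eq_true (by omega : 1 ≤ w)]
          simp
        · refine ⟨0, by omega, ?_⟩
          beta_reduce
          rw [if_neg (by omega : ¬ (0:ℕ) = 1), if_neg (by omega : ¬ m' = w),
            if_neg (by omega : ¬ m' = w+1), if_neg (by omega : ¬ m' = w+2),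
            if_neg (by omega : ¬ m' = w+3), decide_eq_true (by omega : 0 ≤ m+2),
            decide_eq_false (by omega : ¬ (1 ≤ 0 ∧ 0 ≤ w))]
          simp
      · rw [if_neg (by omega : ¬ m + 1 ≤ w), if_neg (by omega : ¬ m' + 1 ≤ w)]
        rcases Nat.eq_or_lt_of_le h with h1' | h1'
        · rw [if_pos (by omega : m = w)]
          rcases Nat.eq_or_lt_of_le h' with g1 | g1
          · omega
          rcases Nat.eq_or_lt_of_le g1 with g2 | g2
          · rw [if_neg (by omega), if_pos (by omega : m' = w+1)]
            refine ⟨0, by omega, ?_⟩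
            beta_reduce
            rw [decide_eq_false (by omega : ¬ (1 ≤ 0 ∧ 0 < w)),
              decide_eq_true (by omega : 0 < w)]
            simp
          rcases Nat.eq_or_lt_of_le g2 with g3 | g3
          · rw [if_neg (by omega), if_neg (by omega), if_pos (by omega : m' = w+2)]
            refine ⟨0, by omega, ?_⟩
            beta_reduce
            rw [decide_eq_false (by omega : ¬ (1 ≤ 0 ∧ 0 < w))]
            simp
          rcases Nat.eq_or_lt_of_le g3 with g4 | g4
          · rw [if_neg (by omega), if_neg (by omega), if_neg (by omega),
              if_pos (by omega : m' = w+3)]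
            refine ⟨0, by omega, ?_⟩
            beta_reduce
            rw [decide_eq_false (by omega : ¬ (1 ≤ 0 ∧ 0 < w)),
              decide_eq_true (by omega : 0 ≤ w)]
            simp
          · rw [if_neg (by omega), if_neg (by omega), if_neg (by omega), if_neg (by omega)]
            refine ⟨w, by omega, ?_⟩
            beta_reduce
            rw [decide_eq_false (by omega : ¬ (1 ≤ w ∧ w < w)),
              decide_eq_true (by omega : 1 ≤ w ∧ w ≤ w)]
            simp
        rcases Nat.eq_or_lt_of_le h1' with h2' | h2'
        · rw [if_neg (by omega), if_pos (by omega : m = w+1)]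
          rcases Nat.eq_or_lt_of_le h' with g1 | g1
          · omega
          rcases Nat.eq_or_lt_of_le g1 with g2 | g2
          · omega
          rcases Nat.eq_or_lt_of_le g2 with g3 | g3
          · rw [if_neg (by omega), if_neg (by omega), if_pos (by omega : m' = w+2)]
            refine ⟨w, by omega, ?_⟩
            beta_reduce
            rw [decide_eq_false (by omega : ¬ w < w)]
            simp
          rcases Nat.eq_or_lt_of_le g3 with g4 | g4
          · rw [if_neg (by omega), if_neg (by omega), if_neg (by omega),
              if_pos (by omega : m' = w+3)]
            refine ⟨w, by omega, ?_⟩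
            beta_reduce
            rw [decide_eq_false (by omega : ¬ w < w), decide_eq_true (by omega : w ≤ w)]
            simp
          · rw [if_neg (by omega), if_neg (by omega), if_neg (by omega), if_neg (by omega)]
            refine ⟨0, by omega, ?_⟩
            beta_reduce
            rw [decide_eq_true (by omega : 0 < w),
              decide_eq_false (by omega : ¬ (1 ≤ 0 ∧ 0 ≤ w))]
            simp
        rcases Nat.eq_or_lt_of_le h2' with h3' | h3'
        · rw [if_neg (by omega), if_neg (by omega), if_pos (by omega : m = w+2)]
          rcases Nat.eq_or_lt_of_le h' with g1 | g1
          · omega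
          rcases Nat.eq_or_lt_of_le g1 with g2 | g2
          · omega
          rcases Nat.eq_or_lt_of_le g2 with g3 | g3
          · omega
          rcases Nat.eq_or_lt_of_le g3 with g4 | g4
          · rw [if_neg (by omega), if_neg (by omega), if_neg (by omega),
              if_pos (by omega : m' = w+3)]
            refine ⟨w+1, by omega, ?_⟩
            beta_reduce
            rw [decide_eq_false (by omega : ¬ w+1 ≤ w)]
            simp
          · rw [if_neg (by omega), if_neg (by omega), if_neg (by omega), if_neg (by omega)]
            refine ⟨0, by omega, ?_⟩
            beta_reduce
            rw [decide_eq_false (by omega : ¬ (1 ≤ 0 ∧ 0 ≤ w))]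
            simp
        · have hm3 : m = w + 3 := by omega
          have hm4 : m' = w + 4 := by omega
          rw [if_neg (by omega), if_neg (by omega), if_neg (by omega), if_pos hm3,
            if_neg (by omega), if_neg (by omega), if_neg (by omega), if_neg (by omega)]
          refine ⟨0, by omega, ?_⟩
          beta_reduce
          rw [decide_eq_true (by omega : 0 ≤ w),
            decide_eq_false (by omega : ¬ (1 ≤ 0 ∧ 0 ≤ w))]
          simp

end

section
variable (rank : List Bool → ℕ) (w : ℕ)

lemma caseC (hw : 2 ≤ w)
    (hA : rank [false,false] ≤ rank [false,true])
    (hB : rank [false,false] ≤ rank [true,false])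
    (hC : rank [false,false] ≤ rank [true,true])
    (h1 : rank [true,true] ≤ rank [false,true])
    (h2 : rank [true,true] ≤ rank [true,false]) :
    ∃ F : (Fin w → Bool) ⊕ Fin (w+5) → List Bool, Function.Injective F ∧
      ∀ d, (F d).length = w+2 ∧ Charged rank w (F d) := by
  have le00 : ∀ a b : Bool, rank [false,false] ≤ rank [a,b] := by
    intro a b
    cases a <;> cases b
    · exact le_refl _
    · exact hA
    · exact hB
    · exact hC
  have le11nz : ∀ a b : Bool, ¬(a = false ∧ b = false) → rank [true,true] ≤ rank [a,b] := by
    intro a b hab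
    cases a <;> cases b
    · exact absurd ⟨rfl, rfl⟩ hab
    · exact h1
    · exact h2
    · exact le_refl _
  -- alternating string g6
  obtain ⟨g6, hg6c, hg6a, hg6b⟩ :
      ∃ g : ℕ → Bool, Charged rank w (Mk (w+2) g) ∧ g 1 = !(g 0) ∧ g (w+1) = !(g w) := by
    rcases le_total (rank [false,true]) (rank [true,false]) with hr | hr
    · refine ⟨fun j => decide (j % 2 = 1), ?_, ?_, ?_⟩
      · apply charged_T1
        intro i hi
        rw [decide_eq_false (by omega : ¬ (0:ℕ) % 2 = 1), decide_eq_true (by omega : (1:ℕ) % 2 = 1)]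
        rcases (by omega : i % 2 = 0 ∨ i % 2 = 1) with h | h
        · rw [decide_eq_false (by omega : ¬ i % 2 = 1), decide_eq_true (by omega : (i+1) % 2 = 1)]
        · rw [decide_eq_true h, decide_eq_false (by omega : ¬ (i+1) % 2 = 1)]
          exact hr
      · beta_reduce
        rw [decide_eq_false (by omega : ¬ (0:ℕ) % 2 = 1), decide_eq_true (by omega : (1:ℕ) % 2 = 1)]
        rfl
      · beta_reduce
        rcases (by omega : w % 2 = 0 ∨ w % 2 = 1) with h | h
        · rw [decide_eq_false (by omega : ¬ w % 2 = 1), decide_eq_true (by omega : (w+1) % 2 = 1)]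
          rfl
        · rw [decide_eq_true h, decide_eq_false (by omega : ¬ (w+1) % 2 = 1)]
          rfl
    · refine ⟨fun j => decide (j % 2 = 0), ?_, ?_, ?_⟩
      · apply charged_T1
        intro i hi
        rw [decide_eq_true (by omega : (0:ℕ) % 2 = 0), decide_eq_false (by omega : ¬ (1:ℕ) % 2 = 0)]
        rcases (by omega : i % 2 = 0 ∨ i % 2 = 1) with h | h
        · rw [decide_eq_true h, decide_eq_false (by omega : ¬ (i+1) % 2 = 0)]
        · rw [decide_eq_false (by omega : ¬ i % 2 = 0), decide_eq_true (by omega : (i+1) % 2 = 0)]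
          exact hr
      · beta_reduce
        rw [decide_eq_true (by omega : (0:ℕ) % 2 = 0), decide_eq_false (by omega : ¬ (1:ℕ) % 2 = 0)]
        rfl
      · beta_reduce
        rcases (by omega : w % 2 = 0 ∨ w % 2 = 1) with h | h
        · rw [decide_eq_true h, decide_eq_false (by omega : ¬ (w+1) % 2 = 0)]
          rfl
        · rw [decide_eq_false (by omega : ¬ w % 2 = 0), decide_eq_true (by omega : (w+1) % 2 = 0)]
          rfl
  refine assemble rank w false false
    (fun m => if m ≤ w then
        (fun j => decide (j ≤ m+1) || decide ((j - m) % 2 = 1))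
      else if m = w+1 then (fun j => decide (j < w))
      else if m = w+2 then (fun j => decide (1 ≤ j ∧ j < w))
      else if m = w+3 then (fun j => if j ≤ w then decide ((w - j) % 2 = 0) else true)
      else g6) ?_ ?_ ?_ ?_
  · -- base family charged
    intro s
    apply charged_T1min
    intro a b
    have e0 : (if h : 2 ≤ 0 ∧ 0 - 2 < w then s ⟨0-2, h.2⟩ else if 0 = 0 then false else false)
        = false := by simp
    have e1 : (if h : 2 ≤ 1 ∧ 1 - 2 < w then s ⟨1-2, h.2⟩ else if 1 = 0 then false else false)
        = false := by norm_num
    rw [e0, e1]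
    exact le00 a b
  · -- extras charged
    intro m hm
    beta_reduce
    rcases Nat.lt_or_ge m (w+1) with h | h
    · rw [if_pos (by omega : m ≤ w)]
      apply charged_T1_nz
      · intro i hi hcon
        obtain ⟨e1, e2⟩ := hcon
        simp only [Bool.or_eq_false_iff, decide_eq_false_iff_not] at e1 e2
        omega
      · intro a b hab
        rw [decide_eq_true (by omega : 0 ≤ m+1), decide_eq_true (by omega : 1 ≤ m+1)]
        simp only [Bool.true_or]
        exact le11nz a b hab
    · rw [if_neg (by omega)]
      rcases Nat.eq_or_lt_of_le h with h1' | h1'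
      · rw [if_pos (by omega)]
        exact charged_pow00 rank w hw le00
      rcases Nat.eq_or_lt_of_le h1' with h2' | h2'
      · rw [if_neg (by omega), if_pos (by omega)]
        exact charged_01pow00 rank w hw le00
      rcases Nat.eq_or_lt_of_le h2' with h3' | h3'
      · rw [if_neg (by omega), if_neg (by omega), if_pos (by omega)]
        apply charged_T2_gen rank w _ true true
          (by rw [if_pos (le_refl w)]; exact decide_eq_true (by omega))
          (by rw [if_neg (by omega : ¬ w+1 ≤ w)])
        · intro i hi
          apply le11nz
          intro hcon
          obtain ⟨e1, e2⟩ := hcon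
          rw [if_pos hi] at e1
          rcases Nat.lt_or_ge w (i+1) with hc | hc
          · rw [if_neg (by omega : ¬ i+1 ≤ w)] at e2
            simp at e2
          · rw [if_pos (by omega : i+1 ≤ w)] at e2
            simp only [decide_eq_false_iff_not] at e1 e2
            omega
        · intro i hi hcon
          obtain ⟨e1, e2⟩ := hcon
          rw [if_pos (by omega : i ≤ w)] at e1
          rw [if_pos (by omega : i+1 ≤ w)] at e2
          simp only [decide_eq_true_eq] at e1 e2
          omega
      · rw [if_neg (by omega), if_neg (by omega), if_neg (by omega)]
        exact hg6c
  · -- cross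
    intro m hm hcon
    obtain ⟨hc0, hc1⟩ := hcon
    beta_reduce at hc0 hc1
    rcases Nat.lt_or_ge m (w+1) with h | h
    · rw [if_pos (by omega : m ≤ w), decide_eq_true (by omega : 0 ≤ m+1)] at hc0
      simp at hc0
    · rw [if_neg (by omega)] at hc0 hc1
      rcases Nat.eq_or_lt_of_le h with h1' | h1'
      · rw [if_pos (by omega), decide_eq_true (by omega : 0 < w)] at hc0
        simp at hc0
      rcases Nat.eq_or_lt_of_le h1' with h2' | h2'
      · rw [if_neg (by omega), if_pos (by omega),
          decide_eq_true (by omega : 1 ≤ 1 ∧ 1 < w)] at hc1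
        simp at hc1
      rcases Nat.eq_or_lt_of_le h2' with h3' | h3'
      · rw [if_neg (by omega), if_neg (by omega), if_pos (by omega),
          if_pos (by omega : (0:ℕ) ≤ w)] at hc0
        rw [if_neg (by omega), if_neg (by omega), if_pos (by omega),
          if_pos (by omega : (1:ℕ) ≤ w)] at hc1
        simp only [decide_eq_false_iff_not] at hc0 hc1
        omega
      · rw [if_neg (by omega), if_neg (by omega), if_neg (by omega)] at hc0 hc1
        rw [hc0] at hg6a
        rw [hg6a] at hc1
        simp at hc1
  · -- pairwise
    intro m m' hlt hm'
    beta_reduce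
    rcases Nat.lt_or_ge m' (w+1) with h' | h'
    · refine ⟨m+2, by omega, ?_⟩
      rw [if_pos (by omega : m ≤ w), if_pos (by omega : m' ≤ w),
        decide_eq_false (by omega : ¬ m+2 ≤ m+1),
        decide_eq_false (by omega : ¬ (m+2-m) % 2 = 1),
        decide_eq_true (by omega : m+2 ≤ m'+1)]
      simp
    · rcases Nat.lt_or_ge m (w+1) with h | h
      · -- m ≤ w (C4) vs singletons
        have hC4 : ∀ j, j ≤ w+1 →
            (decide (j ≤ m+1) || decide ((j - m) % 2 = 1)) = true ∨
            (decide (j+1 ≤ m+1) || decide ((j+1 - m) % 2 = 1)) = true := by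
          intro j hj
          rcases Nat.lt_or_ge (m+1) j with hc | hc
          · rcases (by omega : (j - m) % 2 = 1 ∨ (j+1 - m) % 2 = 1) with hp | hp
            · left; rw [decide_eq_true hp]; simp
            · right; rw [decide_eq_true hp]; simp
          · left; rw [decide_eq_true (by omega : j ≤ m+1)]; simp
        rw [if_pos (by omega : m ≤ w), if_neg (by omega : ¬ m' ≤ w)]
        rcases Nat.eq_or_lt_of_le h' with h1' | h1'
        · rw [if_pos (by omega : m' = w+1)]
          rcases hC4 w (by omega) with hj | hj
          · refine ⟨w, by omega, ?_⟩
            rw [hj, decide_eq_false (by omega : ¬ w < w)]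
            simp
          · refine ⟨w+1, by omega, ?_⟩
            rw [hj, decide_eq_false (by omega : ¬ w+1 < w)]
            simp
        rcases Nat.eq_or_lt_of_le h1' with h2' | h2'
        · rw [if_neg (by omega), if_pos (by omega : m' = w+2)]
          rcases hC4 w (by omega) with hj | hj
          · refine ⟨w, by omega, ?_⟩
            rw [hj, decide_eq_false (by omega : ¬ (1 ≤ w ∧ w < w))]
            simp
          · refine ⟨w+1, by omega, ?_⟩
            rw [hj, decide_eq_false (by omega : ¬ (1 ≤ w+1 ∧ w+1 < w))]
            simp
        rcases Nat.eq_or_lt_of_le h2' with h3' | h3'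
        · rw [if_neg (by omega), if_neg (by omega), if_pos (by omega : m' = w+3)]
          rcases (by omega : w % 2 = 1 ∨ w % 2 = 0) with hp | hp
          · refine ⟨0, by omega, ?_⟩
            rw [decide_eq_true (by omega : 0 ≤ m+1), if_pos (by omega : (0:ℕ) ≤ w),
              decide_eq_false (by omega : ¬ (w - 0) % 2 = 0)]
            simp
          · refine ⟨1, by omega, ?_⟩
            rw [decide_eq_true (by omega : 1 ≤ m+1), if_pos (by omega : (1:ℕ) ≤ w),
              decide_eq_false (by omega : ¬ (w - 1) % 2 = 0)]
            simp
        · rw [if_neg (by omega), if_neg (by omega), if_neg (by omega)]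
          cases hg0 : g6 0 with
          | false =>
            refine ⟨0, by omega, ?_⟩
            rw [decide_eq_true (by omega : 0 ≤ m+1), hg0]
            simp
          | true =>
            refine ⟨1, by omega, ?_⟩
            rw [decide_eq_true (by omega : 1 ≤ m+1), hg6a, hg0]
            simp
      · -- singleton vs singleton
        rw [if_neg (by omega : ¬ m ≤ w), if_neg (by omega : ¬ m' ≤ w)]
        rcases Nat.eq_or_lt_of_le h with h1' | h1'
        · rw [if_pos (by omega : m = w+1)]
          rcases Nat.eq_or_lt_of_le h' with g1 | g1
          · omega
          rcases Nat.eq_or_lt_of_le g1 with g2 | g2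
          · rw [if_neg (by omega), if_pos (by omega : m' = w+2)]
            refine ⟨0, by omega, ?_⟩
            rw [decide_eq_true (by omega : 0 < w),
              decide_eq_false (by omega : ¬ (1 ≤ 0 ∧ 0 < w))]
            simp
          rcases Nat.eq_or_lt_of_le g2 with g3 | g3
          · rw [if_neg (by omega), if_neg (by omega), if_pos (by omega : m' = w+3)]
            refine ⟨w+1, by omega, ?_⟩
            rw [decide_eq_false (by omega : ¬ w+1 < w), if_neg (by omega : ¬ w+1 ≤ w)]
            simp
          · rw [if_neg (by omega), if_neg (by omega), if_neg (by omega)]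
            cases hgw : g6 w with
            | true =>
              refine ⟨w, by omega, ?_⟩
              rw [decide_eq_false (by omega : ¬ w < w), hgw]
              simp
            | false =>
              refine ⟨w+1, by omega, ?_⟩
              rw [decide_eq_false (by omega : ¬ w+1 < w), hg6b, hgw]
              simp
        rcases Nat.eq_or_lt_of_le h1' with h2' | h2'
        · rw [if_neg (by omega), if_pos (by omega : m = w+2)]
          rcases Nat.eq_or_lt_of_le h' with g1 | g1
          · omega
          rcases Nat.eq_or_lt_of_le g1 with g2 | g2
          · omega
          rcases Nat.eq_or_lt_of_le g2 with g3 | g3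
          · rw [if_neg (by omega), if_neg (by omega), if_pos (by omega : m' = w+3)]
            refine ⟨w+1, by omega, ?_⟩
            rw [decide_eq_false (by omega : ¬ (1 ≤ w+1 ∧ w+1 < w)), if_neg (by omega : ¬ w+1 ≤ w)]
            simp
          · rw [if_neg (by omega), if_neg (by omega), if_neg (by omega)]
            cases hgw : g6 w with
            | true =>
              refine ⟨w, by omega, ?_⟩
              rw [decide_eq_false (by omega : ¬ (1 ≤ w ∧ w < w)), hgw]
              simp
            | false =>
              refine ⟨w+1, by omega, ?_⟩
              rw [decide_eq_false (by omega : ¬ (1 ≤ w+1 ∧ w+1 < w)), hg6b, hgw]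
              simp
        · have hm3 : m = w + 3 := by omega
          have hm4 : m' = w + 4 := by omega
          rw [if_neg (by omega), if_neg (by omega), if_pos hm3,
            if_neg (by omega), if_neg (by omega), if_neg (by omega)]
          cases hgw : g6 w with
          | false =>
            refine ⟨w, by omega, ?_⟩
            rw [if_pos (le_refl w), decide_eq_true (by omega : (w - w) % 2 = 0), hgw]
            simp
          | true =>
            refine ⟨w+1, by omega, ?_⟩
            rw [if_neg (by omega : ¬ w+1 ≤ w), hg6b, hgw]
            simp

end

section
variable (rank : List Bool → ℕ) (w : ℕ)

lemma case00min (hw : 2 ≤ w)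
    (hA : rank [false,false] ≤ rank [false,true])
    (hB : rank [false,false] ≤ rank [true,false])
    (hC : rank [false,false] ≤ rank [true,true]) :
    ∃ F : (Fin w → Bool) ⊕ Fin (w+5) → List Bool, Function.Injective F ∧
      ∀ d, (F d).length = w+2 ∧ Charged rank w (F d) := by
  rcases le_total (rank [false,true]) (rank [true,false]) with g1 | g1
  · rcases le_total (rank [false,true]) (rank [true,true]) with g2 | g2
    · exact caseB rank w hw hA hB hC g1 g2
    · exact caseC rank w hw hA hB hC g2 (le_trans g2 g1)
  · rcases le_total (rank [true,false]) (rank [true,true]) with g2 | g2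
    · exact caseB' rank w hw hA hB hC g1 g2
    · exact caseC rank w hw hA hB hC (le_trans g2 g1) g2

lemma flip_charged (l : List Bool)
    (h : Charged (fun v => rank (v.map not)) w l) :
    Charged rank w (l.map not) := by
  have key : ∀ i, kmerAt (List.map not l) i = (kmerAt l i).map not := by
    intro i
    simp [kmerAt]
  have hinjn : Function.Injective (List.map (not : Bool → Bool)) :=
    List.map_injective_iff.mpr (fun a b hab => by cases a <;> cases b <;> simp_all)
  rcases h with h | ⟨h, hu⟩
  · left
    intro i hi
    rw [key, key]
    exact h i hi
  · right
    refine ⟨fun i hi => by rw [key, key]; exact h i hi, fun i hi heq => ?_⟩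
    apply hu i hi
    rw [key, key] at heq
    exact hinjn heq

lemma flip_exists
    (h : ∃ F : (Fin w → Bool) ⊕ Fin (w+5) → List Bool, Function.Injective F ∧
      ∀ d, (F d).length = w+2 ∧ Charged (fun v => rank (v.map not)) w (F d)) :
    ∃ F : (Fin w → Bool) ⊕ Fin (w+5) → List Bool, Function.Injective F ∧
      ∀ d, (F d).length = w+2 ∧ Charged rank w (F d) := by
  obtain ⟨F, hFi, hF⟩ := h
  have hinjn : Function.Injective (List.map (not : Bool → Bool)) :=
    List.map_injective_iff.mpr (fun a b hab => by cases a <;> cases b <;> simp_all)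
  refine ⟨fun d => (F d).map not, fun a b hab => hFi (hinjn hab), fun d => ⟨?_, ?_⟩⟩
  · rw [List.length_map]
    exact (hF d).1
  · exact flip_charged rank w (F d) (hF d).2

lemma exists_inj (hw : 2 ≤ w) :
    ∃ F : (Fin w → Bool) ⊕ Fin (w+5) → List Bool, Function.Injective F ∧
      ∀ d, (F d).length = w+2 ∧ Charged rank w (F d) := by
  rcases le_total (rank [false,false]) (rank [true,true]) with h1 | h1 <;>
    rcases le_total (rank [false,true]) (rank [true,false]) with h2 | h2
  · rcases le_total (rank [false,false]) (rank [false,true]) with h3 | h3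
    · exact case00min rank w hw h3 (le_trans h3 h2) h1
    · exact caseA rank w hw h3 h2 (le_trans h3 h1)
  · rcases le_total (rank [false,false]) (rank [true,false]) with h3 | h3
    · exact case00min rank w hw (le_trans h3 h2) h3 h1
    · exact flip_exists rank w
        (caseA (fun v => rank (v.map not)) w hw (le_trans h3 h1) h2 h3)
  · rcases le_total (rank [true,true]) (rank [false,true]) with h3 | h3
    · exact flip_exists rank w
        (case00min (fun v => rank (v.map not)) w hw (le_trans h3 h2) h3 h1)
    · exact caseA rank w hw (le_trans h3 h1) h2 h3
  · rcases le_total (rank [true,true]) (rank [true,false]) with h3 | h3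
    · exact flip_exists rank w
        (case00min (fun v => rank (v.map not)) w hw h3 (le_trans h3 h2) h1)
    · exact flip_exists rank w
        (caseA (fun v => rank (v.map not)) w hw h3 h2 (le_trans h3 h1))

end

end Stmt9Aux

/-- For every w ≥ 2 and every linear order (injective rank) on binary 2-mers, the density
of the corresponding (2,2,w)-minimizer is at least (2^w + w + 5)/2^{w+2}. -/
theorem stmt9 (w : ℕ) (hw : 2 ≤ w) (rank : List Bool → ℕ)
    (hinj : ∀ a b : List Bool, a.length = 2 → b.length = 2 → rank a = rank b → a = b) :
    (2 ^ w + w + 5 : ℚ) / 2 ^ (w + 2)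
      ≤ (Nat.card {l : List Bool // l.length = w + 2 ∧ Charged rank w l} : ℚ)
          / 2 ^ (w + 2) := by
  obtain ⟨F, hFi, hF⟩ := Stmt9Aux.exists_inj rank w hw
  have hfin : Finite {l : List Bool // l.length = w + 2 ∧ Charged rank w l} := by
    apply Finite.of_injective (fun x : {l : List Bool // l.length = w + 2 ∧ Charged rank w l} =>
      (fun i : Fin (w+2) => x.val.getD i false))
    intro x y hxy
    apply Subtype.ext
    apply List.ext_getElem (by rw [x.2.1, y.2.1])
    intro j hj hj'
    have := congrFun hxy ⟨j, by rw [x.2.1] at hj; exact hj⟩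
    simpa [List.getD_eq_getElem?_getD, List.getElem?_eq_getElem hj,
      List.getElem?_eq_getElem hj'] using this
  have hcard : 2 ^ w + w + 5 ≤ Nat.card {l : List Bool // l.length = w + 2 ∧ Charged rank w l} := by
    have hinj2 : Function.Injective (fun d => (⟨F d, (hF d).1, (hF d).2⟩ :
        {l : List Bool // l.length = w + 2 ∧ Charged rank w l})) := by
      intro a b hab
      exact hFi (congrArg Subtype.val hab)
    have hle := Nat.card_le_card_of_injective _ hinj2
    have hdom : Nat.card ((Fin w → Bool) ⊕ Fin (w+5)) = 2 ^ w + w + 5 := by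
      simp [Nat.card_eq_fintype_card]
      omega
    omega
  have h2 : (0:ℚ) < 2 ^ (w+2) := by positivity
  rw [div_le_div_iff_of_pos_right h2]
  exact_mod_cast hcard
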